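/- Fix ρ > 0, θ ∈ ℝ. For N₁ < N₂ with N₂ρ(1+θ) < 1, the cooperative normalized payoff functions satisfy U*_{N₁}(a) ≤ U*_{N₂}(a) for all a ≥ 0, where U*_N is given by U*_N(a) = (γ₂e^{−γ₁(a*_N − a)} − γ₁e^{−γ₂(a*_N − a)})/(γ₂ − γ₁) on [0, a*_N) and U*_N(a) = 1 for a ≥ a*_N, with γ₁ < γ₂ the roots of γ(γ−θ) = 1/(Nρ) and a*_N = (ln(1+1/γ₂) − ln(1+1/γ₁))/(γ₂−γ₁). -/

import Mathlib

/-- The cooperative stopping cutoff `a*`. -/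
noncomputable def astarDef (γ₁ γ₂ : ℝ) : ℝ :=
  (Real.log (1 + 1 / γ₂) - Real.log (1 + 1 / γ₁)) / (γ₂ - γ₁)

/-- The cooperative normalized payoff function: the explicit formula below the
cutoff `a*`, and `1` above it. -/
noncomputable def UstarFull (γ₁ γ₂ : ℝ) (a : ℝ) : ℝ :=
  if a < astarDef γ₁ γ₂ then
    (γ₂ * Real.exp (-γ₁ * (astarDef γ₁ γ₂ - a))
      - γ₁ * Real.exp (-γ₂ * (astarDef γ₁ γ₂ - a))) / (γ₂ - γ₁)
  else 1

namespace CoopAux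

/-- Smooth extension of the payoff formula. -/
noncomputable def F (p q A a : ℝ) : ℝ :=
  (q * Real.exp (p * (a - A)) - p * Real.exp (q * (a - A))) / (q - p)

/-- Its derivative. -/
noncomputable def G (p q A a : ℝ) : ℝ :=
  p * q * (Real.exp (p * (a - A)) - Real.exp (q * (a - A))) / (q - p)

lemma hasDerivAt_F (p q A a : ℝ) : HasDerivAt (F p q A) (G p q A a) a := by
  have h1 : HasDerivAt (fun a => Real.exp (p * (a - A))) (Real.exp (p * (a - A)) * p) a := by
    have hlin : HasDerivAt (fun x : ℝ => p * (x - A)) p a := by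
      simpa using ((hasDerivAt_id a).sub_const A).const_mul p
    exact hlin.exp
  have h2 : HasDerivAt (fun a => Real.exp (q * (a - A))) (Real.exp (q * (a - A)) * q) a := by
    have hlin : HasDerivAt (fun x : ℝ => q * (x - A)) q a := by
      simpa using ((hasDerivAt_id a).sub_const A).const_mul q
    exact hlin.exp
  have := (((h1.const_mul q).sub (h2.const_mul p)).div_const (q - p))
  exact this.congr_deriv (by unfold G; ring)

lemma hasDerivAt_G (p q A a : ℝ) :
    HasDerivAt (G p q A) ((p + q) * G p q A a - p * q * F p q A a) a := by
  have h1 : HasDerivAt (fun a => Real.exp (p * (a - A))) (Real.exp (p * (a - A)) * p) a := by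
    have hlin : HasDerivAt (fun x : ℝ => p * (x - A)) p a := by
      simpa using ((hasDerivAt_id a).sub_const A).const_mul p
    exact hlin.exp
  have h2 : HasDerivAt (fun a => Real.exp (q * (a - A))) (Real.exp (q * (a - A)) * q) a := by
    have hlin : HasDerivAt (fun x : ℝ => q * (x - A)) q a := by
      simpa using ((hasDerivAt_id a).sub_const A).const_mul q
    exact hlin.exp
  have := (((h1.sub h2).const_mul (p * q)).div_const (q - p))
  exact this.congr_deriv (by unfold F G; field_simp; ring)

lemma F_ge_one {p q : ℝ} (hp : p < 0) (hq : 0 < q) (A a : ℝ) : 1 ≤ F p q A a := by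
  have e1 : p * (a - A) + 1 ≤ Real.exp (p * (a - A)) := Real.add_one_le_exp _
  have e2 : q * (a - A) + 1 ≤ Real.exp (q * (a - A)) := Real.add_one_le_exp _
  rw [F, le_div_iff₀ (by linarith)]
  nlinarith [mul_le_mul_of_nonneg_left e1 hq.le,
    mul_le_mul_of_nonneg_left e2 (by linarith : (0:ℝ) ≤ -p)]

lemma F_pos {p q : ℝ} (hp : p < 0) (hq : 0 < q) (A a : ℝ) : 0 < F p q A a :=
  lt_of_lt_of_le one_pos (F_ge_one hp hq A a)

lemma F_at_A {p q : ℝ} (h : p < q) (A : ℝ) : F p q A A = 1 := by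
  simp [F, div_self (by linarith : q - p ≠ 0)]

lemma G_at_A (p q A : ℝ) : G p q A A = 0 := by simp [G]

lemma G_neg {p q A a : ℝ} (hp : p < 0) (hq : 0 < q) (ha : a < A) : G p q A a < 0 := by
  have h1 : q * (a - A) < p * (a - A) := by nlinarith
  have h2 : Real.exp (q * (a - A)) < Real.exp (p * (a - A)) := Real.exp_lt_exp.2 h1
  have h3 : p * q < 0 := mul_neg_of_neg_of_pos hp hq
  rw [G, div_neg_iff]
  right
  exact ⟨by nlinarith, by linarith⟩

lemma inv_facts {p : ℝ} (hp : p < -1) : 0 < 1 + 1/p ∧ 1 + 1/p < 1 := by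
  have hp0 : p < 0 := by linarith
  constructor
  · have : -1 < 1/p := by rw [lt_div_iff_of_neg hp0]; linarith
    linarith
  · have : 1/p < 0 := div_neg_of_pos_of_neg one_pos hp0
    linarith

lemma astar_pos {p q : ℝ} (hp : p < -1) (hq : 0 < q) : 0 < astarDef p q := by
  obtain ⟨h1, h2⟩ := inv_facts hp
  have hlq : 0 < Real.log (1 + 1/q) := Real.log_pos (by nlinarith [one_div_pos.2 hq])
  have hlp : Real.log (1 + 1/p) < 0 := Real.log_neg h1 h2
  have hpq : p < q := by linarith
  exact div_pos (by linarith) (by linarith)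

/-- The defining relation of the cutoff. -/
lemma astar_rel {p q : ℝ} (hp : p < -1) (hq : 0 < q) :
    (1 + 1/p) * Real.exp (-(p * astarDef p q)) = (1 + 1/q) * Real.exp (-(q * astarDef p q)) := by
  obtain ⟨h1, _⟩ := inv_facts hp
  have h2 : 0 < 1 + 1/q := by positivity
  have hpq : q - p ≠ 0 := by intro h; nlinarith
  have key : (q - p) * astarDef p q = Real.log ((1 + 1/q) / (1 + 1/p)) := by
    rw [Real.log_div (ne_of_gt h2) (ne_of_gt h1), astarDef]
    field_simp
  have hexp : Real.exp ((q - p) * astarDef p q) = (1 + 1/q) / (1 + 1/p) := by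
    rw [key, Real.exp_log (div_pos h2 h1)]
  have hsplit : Real.exp (-(p * astarDef p q)) =
      Real.exp (-(q * astarDef p q)) * ((1 + 1/q) / (1 + 1/p)) := by
    rw [← hexp, ← Real.exp_add]; ring_nf
  rw [hsplit]
  field_simp

/-- The boundary condition `U'(0) = -U(0)` encoded by the cutoff. -/
lemma boundary {p q : ℝ} (hp : p < -1) (hq : 0 < q) :
    G p q (astarDef p q) 0 = - F p q (astarDef p q) 0 := by
  have hrel := astar_rel hp hq
  set A := astarDef p q
  have hp0 : p ≠ 0 := by intro h; rw [h] at hp; norm_num at hp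
  have hq0 : q ≠ 0 := ne_of_gt hq
  have hqp : q - p ≠ 0 := by intro h; nlinarith
  have e1 : p * ((0:ℝ) - A) = -(p * A) := by ring
  have e2 : q * ((0:ℝ) - A) = -(q * A) := by ring
  rw [F, G, e1, e2]
  field_simp at hrel ⊢
  linear_combination hrel

/-- The Wronskian-type quantity is strictly negative for positive `a`. -/
lemma phi_neg {θ c1 c2 p1 q1 p2 q2 A B : ℝ}
    (hs1 : p1 + q1 = θ) (hs2 : p2 + q2 = θ)
    (hpr1 : p1 * q1 = -c1) (hpr2 : p2 * q2 = -c2)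
    (hc : c2 < c1)
    (hp1 : p1 < 0) (hq1 : 0 < q1) (hp2 : p2 < 0) (hq2 : 0 < q2)
    (hb1 : G p1 q1 A 0 = - F p1 q1 A 0) (hb2 : G p2 q2 B 0 = - F p2 q2 B 0) :
    ∀ a : ℝ, 0 < a →
      Real.exp (-(θ*a)) * (G p2 q2 B a * F p1 q1 A a - G p1 q1 A a * F p2 q2 B a) < 0 := by
  set Φ : ℝ → ℝ := fun a =>
    Real.exp (-(θ*a)) * (G p2 q2 B a * F p1 q1 A a - G p1 q1 A a * F p2 q2 B a) with hΦdef
  have hΦd : ∀ a, HasDerivAt Φ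
      (Real.exp (-(θ*a)) * ((c2 - c1) * (F p1 q1 A a * F p2 q2 B a))) a := by
    intro a
    have hlin : HasDerivAt (fun x : ℝ => -(θ*x)) (-θ) a := by
      exact ((hasDerivAt_id' a).const_mul θ).neg.congr_deriv (by ring)
    have hE : HasDerivAt (fun a => Real.exp (-(θ*a))) (Real.exp (-(θ*a)) * (-θ)) a := hlin.exp
    have hW : HasDerivAt (fun a => G p2 q2 B a * F p1 q1 A a - G p1 q1 A a * F p2 q2 B a)
        ((((p2+q2) * G p2 q2 B a - p2*q2 * F p2 q2 B a) * F p1 q1 A a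
            + G p2 q2 B a * G p1 q1 A a)
          - (((p1+q1) * G p1 q1 A a - p1*q1 * F p1 q1 A a) * F p2 q2 B a
            + G p1 q1 A a * G p2 q2 B a)) a :=
      ((hasDerivAt_G p2 q2 B a).mul (hasDerivAt_F p1 q1 A a)).sub
        ((hasDerivAt_G p1 q1 A a).mul (hasDerivAt_F p2 q2 B a))
    have := hE.mul hW
    apply this.congr_deriv
    rw [hs1, hs2, hpr1, hpr2]
    ring
  have hΦ0 : Φ 0 = 0 := by
    rw [hΦdef]
    simp only
    rw [hb1, hb2]; ring
  have hanti : StrictAntiOn Φ (Set.Ici (0:ℝ)) := by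
    apply strictAntiOn_of_deriv_neg (convex_Ici 0)
      (fun x _ => (hΦd x).continuousAt.continuousWithinAt)
    intro x _
    rw [(hΦd x).deriv]
    have hf1 := F_pos hp1 hq1 A x
    have hf2 := F_pos hp2 hq2 B x
    have : (c2 - c1) * (F p1 q1 A x * F p2 q2 B x) < 0 :=
      mul_neg_of_neg_of_pos (by linarith) (mul_pos hf1 hf2)
    exact mul_neg_of_pos_of_neg (Real.exp_pos _) this
  intro a ha
  have := hanti Set.self_mem_Ici (Set.mem_Ici.2 ha.le) ha
  rw [hΦ0] at this
  exact this

lemma Ustar_eq (p q a : ℝ) :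
    UstarFull p q a = if a < astarDef p q then F p q (astarDef p q) a else 1 := by
  unfold UstarFull F
  have e1 : -p * (astarDef p q - a) = p * (a - astarDef p q) := by ring
  have e2 : -q * (astarDef p q - a) = q * (a - astarDef p q) := by ring
  rw [e1, e2]

end CoopAux

open CoopAux in
set_option maxHeartbeats 1000000 in
theorem cooperative_value_monotone_in_N (ρ θ N₁ N₂ γ₁ γ₂ δ₁ δ₂ : ℝ)
    (hρ : 0 < ρ) (hN₁ : 1 ≤ N₁) (hN : N₁ < N₂)
    (hmain₂ : N₂ * ρ * (1 + θ) < 1)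
    (hlt : γ₁ < γ₂) (hlt' : δ₁ < δ₂)
    (hroot1 : γ₁ * (γ₁ - θ) = 1 / (N₁ * ρ))
    (hroot2 : γ₂ * (γ₂ - θ) = 1 / (N₁ * ρ))
    (hroot1' : δ₁ * (δ₁ - θ) = 1 / (N₂ * ρ))
    (hroot2' : δ₂ * (δ₂ - θ) = 1 / (N₂ * ρ)) :
    ∀ a : ℝ, 0 ≤ a → UstarFull γ₁ γ₂ a ≤ UstarFull δ₁ δ₂ a := by
  have hN₁pos : 0 < N₁ := by linarith
  have hN₂pos : 0 < N₂ := by linarith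
  have hc₁pos : 0 < 1/(N₁*ρ) := by positivity
  have hc₂pos : 0 < 1/(N₂*ρ) := by positivity
  have hc : 1/(N₂*ρ) < 1/(N₁*ρ) :=
    one_div_lt_one_div_of_lt (by positivity) (by nlinarith)
  have hsumγ : γ₁ + γ₂ = θ := by
    have h : (γ₁ - γ₂) * (γ₁ + γ₂ - θ) = 0 := by linear_combination hroot1 - hroot2
    rcases mul_eq_zero.1 h with h | h
    · exfalso; exact ne_of_lt hlt (by linarith)
    · linarith
  have hsumδ : δ₁ + δ₂ = θ := by
    have h : (δ₁ - δ₂) * (δ₁ + δ₂ - θ) = 0 := by linear_combination hroot1' - hroot2'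
    rcases mul_eq_zero.1 h with h | h
    · exfalso; exact ne_of_lt hlt' (by linarith)
    · linarith
  have hprodγ : γ₁ * γ₂ = -(1/(N₁*ρ)) := by linear_combination γ₁ * hsumγ - hroot1
  have hprodδ : δ₁ * δ₂ = -(1/(N₂*ρ)) := by linear_combination δ₁ * hsumδ - hroot1'
  have hγ₂pos : 0 < γ₂ := by nlinarith
  have hγ₁neg : γ₁ < 0 := by nlinarith
  have hδ₂pos : 0 < δ₂ := by nlinarith
  have hδ₁neg : δ₁ < 0 := by nlinarith
  have hθc₂ : 1 + θ < 1/(N₂*ρ) := by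
    rw [lt_div_iff₀ (by positivity)]; nlinarith
  have hθc₁ : 1 + θ < 1/(N₁*ρ) := lt_trans hθc₂ hc
  have hγ₁ : γ₁ < -1 := by
    by_contra h; push_neg at h
    nlinarith [mul_nonneg (by linarith : (0:ℝ) ≤ γ₁ + 1) (by linarith : (0:ℝ) ≤ γ₂ + 1)]
  have hδ₁ : δ₁ < -1 := by
    by_contra h; push_neg at h
    nlinarith [mul_nonneg (by linarith : (0:ℝ) ≤ δ₁ + 1) (by linarith : (0:ℝ) ≤ δ₂ + 1)]
  set A := astarDef γ₁ γ₂ with hAdef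
  set B := astarDef δ₁ δ₂ with hBdef
  have hApos : 0 < A := astar_pos hγ₁ hγ₂pos
  have hBpos : 0 < B := astar_pos hδ₁ hδ₂pos
  have hb1 : G γ₁ γ₂ A 0 = - F γ₁ γ₂ A 0 := boundary hγ₁ hγ₂pos
  have hb2 : G δ₁ δ₂ B 0 = - F δ₁ δ₂ B 0 := boundary hδ₁ hδ₂pos
  have hΦneg := phi_neg hsumγ hsumδ hprodγ hprodδ hc hγ₁neg hγ₂pos hδ₁neg hδ₂pos hb1 hb2
  -- cutoff monotone
  have hAB : A ≤ B := by
    by_contra h; push_neg at h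
    have h1 := hΦneg B hBpos
    rw [G_at_A, F_at_A hlt'] at h1
    have h4 : G γ₁ γ₂ A B < 0 := G_neg hγ₁neg hγ₂pos h
    have h5 := Real.exp_pos (-(θ*B))
    nlinarith [mul_pos h5 (mul_pos (neg_pos.2 h4) (F_pos hγ₁neg hγ₂pos A B))]
  -- ratio argument on [0, A]
  have key : ∀ a ∈ Set.Icc (0:ℝ) A, F γ₁ γ₂ A a ≤ F δ₁ δ₂ B a := by
    have hRd : ∀ x : ℝ, HasDerivAt (fun a => F δ₁ δ₂ B a / F γ₁ γ₂ A a)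
        ((G δ₁ δ₂ B x * F γ₁ γ₂ A x - F δ₁ δ₂ B x * G γ₁ γ₂ A x) / (F γ₁ γ₂ A x)^2) x :=
      fun x => (hasDerivAt_F δ₁ δ₂ B x).div (hasDerivAt_F γ₁ γ₂ A x)
        (ne_of_gt (F_pos hγ₁neg hγ₂pos A x))
    have hR : AntitoneOn (fun a => F δ₁ δ₂ B a / F γ₁ γ₂ A a) (Set.Icc 0 A) := by
      apply antitoneOn_of_deriv_nonpos (convex_Icc 0 A)
        (fun x _ => (hRd x).continuousAt.continuousWithinAt)
        (fun x _ => (hRd x).differentiableAt.differentiableWithinAt)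
      intro x hx
      rw [interior_Icc] at hx
      rw [(hRd x).deriv]
      apply div_nonpos_of_nonpos_of_nonneg _ (sq_nonneg _)
      have h1 := hΦneg x hx.1
      have h5 := Real.exp_pos (-(θ*x))
      nlinarith
    intro a ha
    have hAm : A ∈ Set.Icc (0:ℝ) A := ⟨hApos.le, le_refl A⟩
    have h1 := hR ha hAm ha.2
    simp only at h1
    rw [F_at_A hlt, div_one] at h1
    have h2 : (1:ℝ) ≤ F δ₁ δ₂ B a / F γ₁ γ₂ A a :=
      le_trans (F_ge_one hδ₁neg hδ₂pos B A) h1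
    have h3 := F_pos hγ₁neg hγ₂pos A a
    calc F γ₁ γ₂ A a = 1 * F γ₁ γ₂ A a := (one_mul _).symm
      _ ≤ (F δ₁ δ₂ B a / F γ₁ γ₂ A a) * F γ₁ γ₂ A a := by
          exact mul_le_mul_of_nonneg_right h2 h3.le
      _ = F δ₁ δ₂ B a := by field_simp
  intro a ha
  rw [Ustar_eq γ₁ γ₂ a, Ustar_eq δ₁ δ₂ a, ← hAdef, ← hBdef]
  by_cases h1 : a < A
  · rw [if_pos h1, if_pos (lt_of_lt_of_le h1 hAB)]
    exact key a ⟨ha, h1.le⟩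
  · rw [if_neg h1]
    by_cases h2 : a < B
    · rw [if_pos h2]; exact F_ge_one hδ₁neg hδ₂pos B a
    · rw [if_neg h2]
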